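/- arXiv:1207.1133 — 2 statements merged into one kernel-verified Lean document; each statement's English description precedes it below -/
import Mathlib

section
/- The inverse of the Vandermonde matrix V(x_0,...,x_N) has entries v_{ki} = (-1)^{N+k} · e_{N-k}(i)(x) / ∏_{j≠i} (x_i - x_j), where e_m(i)(x) denotes the m-th elementary symmetric polynomial in the variables x_0,...,x_N with x_i omitted. -/
open Polynomial Finset

set_option maxRecDepth 8000

/-- Explicit formula for the entries of the inverse Vandermonde matrix in terms of
elementary symmetric polynomials with one variable omitted. -/
theorem stmt_1 (N : ℕ) (x : Fin (N + 1) → ℝ) (hx : Function.Injective x)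
    (V : Matrix (Fin (N + 1)) (Fin (N + 1)) ℝ) (hV : ∀ i k, V i k = x i ^ (k : ℕ))
    (k i : Fin (N + 1)) :
    V⁻¹ k i = (-1 : ℝ) ^ (N + (k : ℕ)) *
      (∑ S ∈ (Finset.univ.erase i).powersetCard (N - (k : ℕ)), ∏ j ∈ S, x j) /
      ∏ j ∈ Finset.univ.erase i, (x i - x j) := by
  -- the candidate inverse matrix
  set W : Matrix (Fin (N + 1)) (Fin (N + 1)) ℝ := fun k i =>
    (-1 : ℝ) ^ (N + (k : ℕ)) *
      (∑ S ∈ (Finset.univ.erase i).powersetCard (N - (k : ℕ)), ∏ j ∈ S, x j) /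
      ∏ j ∈ Finset.univ.erase i, (x i - x j) with hW
  suffices h : V⁻¹ = W by rw [h]
  have hcard : ∀ i : Fin (N + 1), #(Finset.univ.erase i) = N := by
    intro i
    rw [Finset.card_erase_of_mem (Finset.mem_univ i), Finset.card_univ, Fintype.card_fin]
    omega
  -- the polynomial with roots x_m, m ≠ i
  set P : Fin (N + 1) → ℝ[X] := fun i => ∏ m ∈ Finset.univ.erase i, (X - C (x m)) with hP
  have hD : ∀ i : Fin (N + 1), (∏ j ∈ Finset.univ.erase i, (x i - x j)) ≠ 0 := by
    intro i
    refine Finset.prod_ne_zero_iff.mpr fun j hj => sub_ne_zero.mpr fun h => ?_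
    exact (Finset.ne_of_mem_erase hj).symm (hx h)
  have hcoeff : ∀ (i : Fin (N + 1)) (c : ℕ), c ≤ N →
      (P i).coeff c = (-1 : ℝ) ^ (N + c) *
        ∑ S ∈ (Finset.univ.erase i).powersetCard (N - c), ∏ j ∈ S, x j := by
    intro i c hc
    have h1 : P i = ∏ m ∈ Finset.univ.erase i, (X + C (-(x m))) := by
      simp [hP, sub_eq_add_neg]
    rw [h1, Finset.prod_X_add_C_coeff _ _ (by rw [hcard i]; exact hc), hcard i]
    rw [Finset.mul_sum]
    refine Finset.sum_congr rfl fun S hS => ?_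
    have hScard : #S = N - c := (Finset.mem_powersetCard.mp hS).2
    have hneg : ∏ j ∈ S, -x j = (-1 : ℝ) ^ #S * ∏ j ∈ S, x j := by
      rw [Finset.prod_congr rfl (fun j _ => (neg_one_mul (x j)).symm),
        Finset.prod_mul_distrib, Finset.prod_const]
    rw [hneg, hScard]
    congr 1
    have : N + c = (N - c) + 2 * c := by omega
    rw [this, pow_add]
    simp [pow_mul]
  have hdeg : ∀ i : Fin (N + 1), (P i).natDegree = N := by
    intro i
    rw [hP]
    rw [Polynomial.natDegree_prod _ _ (fun m _ => X_sub_C_ne_zero (x m))]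
    simp [hcard i]
  have heval : ∀ i j : Fin (N + 1),
      ∑ c : Fin (N + 1), (P i).coeff c * x j ^ (c : ℕ) = (P i).eval (x j) := by
    intro i j
    rw [Polynomial.eval_eq_sum_range' (n := N + 1) (by rw [hdeg i]; omega)]
    rw [Fin.sum_univ_eq_sum_range (fun c => (P i).coeff c * x j ^ c)]
  have key : V * W = 1 := by
    ext a b
    rw [Matrix.mul_apply, Matrix.one_apply]
    have : ∀ c : Fin (N + 1), V a c * W c b = (P b).coeff c * x a ^ (c : ℕ) /
        ∏ j ∈ Finset.univ.erase b, (x b - x j) := by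
      intro c
      rw [hV, hW, hcoeff b c (by omega)]
      ring
    rw [Finset.sum_congr rfl fun c _ => this c, ← Finset.sum_div, heval b a]
    by_cases hab : a = b
    · subst hab
      rw [if_pos rfl, hP]
      rw [Polynomial.eval_prod]
      simp only [eval_sub, eval_X, eval_C]
      exact div_self (hD a)
    · rw [if_neg hab, hP]
      rw [Polynomial.eval_prod]
      have : (x a - x a) = 0 := sub_self _
      rw [Finset.prod_eq_zero (Finset.mem_erase.mpr ⟨hab, Finset.mem_univ a⟩)
        (by simp), zero_div]
  exact Matrix.inv_eq_right_inv key
end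

section
/- Let X be a finite connected graph with no leaf vertices and let U ⊆ X be a proper closed subgraph obtained as a union of connected subsets, each missing at least one interior point of some edge. If χ denotes the Euler characteristic, then χ(X) < χ(U). Equivalently, if A is a good covering of X (∂X = ∅) with union |A|, then χ(N(A)) = χ(X) implies |A| = X. -/
/-- If `X` is a finite connected graph with no leaf vertices (every degree at least 2)
and `U` is a nonempty proper subgraph (missing at least one edge of `X`), then
`χ(X) < χ(U)`, where `χ` denotes the Euler characteristic (vertices minus edges). -/
theorem stmt_8 {α : Type*} [Fintype α] (X : SimpleGraph α) [DecidableRel X.Adj]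
    (hconn : X.Connected) (hdeg : ∀ v, 2 ≤ X.degree v)
    (U : X.Subgraph) (hne : U.verts.Nonempty) (hproper : U.edgeSet ≠ X.edgeSet) :
    (Fintype.card α : ℤ) - (Nat.card X.edgeSet : ℤ)
      < (Nat.card U.verts : ℤ) - (Nat.card U.edgeSet : ℤ) := by
  classical
  set Y : SimpleGraph α := X \ U.spanningCoe with hYdef
  have hYadj : ∀ a b : α, Y.Adj a b ↔ X.Adj a b ∧ ¬ U.Adj a b := fun a b => Iff.rfl
  -- edge set of Y
  have hspan : U.spanningCoe.edgeSet = U.edgeSet := by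
    ext e
    induction e using Sym2.ind with
    | _ a b => simp [SimpleGraph.mem_edgeSet, SimpleGraph.Subgraph.mem_edgeSet]
  have hE : Y.edgeSet = X.edgeSet \ U.edgeSet := by
    rw [hYdef, SimpleGraph.edgeSet_sdiff, hspan]
  have hsubE : U.edgeSet ⊆ X.edgeSet := U.edgeSet_subset
  -- the crossing edge
  have hcross : ∃ a b : α, Y.Adj a b ∧ b ∈ U.verts := by
    obtain ⟨e, heX, heU⟩ : ∃ e, e ∈ X.edgeSet \ U.edgeSet := by
      rcases Set.exists_of_ssubset (hsubE.ssubset_of_ne hproper) with ⟨e, he, hne'⟩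
      exact ⟨e, he, hne'⟩
    induction e using Sym2.ind with
    | _ a b =>
      have hY : Y.Adj a b := ⟨heX, fun h => heU (SimpleGraph.Subgraph.mem_edgeSet.mpr h)⟩
      by_cases hb : b ∈ U.verts
      · exact ⟨a, b, hY, hb⟩
      · obtain ⟨u₀, hu₀⟩ := hne
        obtain ⟨p⟩ := hconn.preconnected b u₀
        obtain ⟨d, _, hd1, hd2⟩ := p.exists_boundary_dart {v | v ∉ U.verts} hb
          (fun h => h hu₀)
        refine ⟨d.fst, d.snd, ⟨d.adj, fun h => hd1 h.fst_mem⟩, not_not.mp hd2⟩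
  obtain ⟨a, b, hab, hbU⟩ := hcross
  -- W = vertices missing from U
  set W : Finset α := Finset.univ.filter (· ∉ U.verts) with hWdef
  -- degree bounds
  have hdegY : ∀ w ∈ W, 2 ≤ Y.degree w := by
    intro w hw
    rw [hWdef, Finset.mem_filter] at hw
    refine le_trans (hdeg w) (Finset.card_le_card ?_)
    intro x hx
    rw [SimpleGraph.mem_neighborFinset] at hx ⊢
    exact ⟨hx, fun h => hw.2 h.fst_mem⟩
  have hdegb : 1 ≤ Y.degree b := by
    rw [← SimpleGraph.card_neighborSet_eq_degree]
    have : (Y.neighborSet b).Nonempty := ⟨a, hab.symm⟩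
    simpa [Set.Nonempty, Fintype.card_pos_iff, Set.nonempty_coe_sort] using
      Fintype.card_pos_iff.mpr this.to_subtype
  -- handshake
  have tofin : Y.edgeSet.toFinset = Y.edgeFinset := by
    ext e; simp [SimpleGraph.mem_edgeFinset, Set.mem_toFinset]
  have hsum : ∑ v, Y.degree v = 2 * Nat.card Y.edgeSet := by
    rw [Nat.card_coe_set_eq, Set.ncard_eq_toFinset_card', tofin,
      SimpleGraph.sum_degrees_eq_twice_card_edges Y]
    congr 2
    ext e
    simp [SimpleGraph.mem_edgeFinset]
  have hbW : b ∉ W := by simp [hWdef, hbU]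
  have hsplit : ∑ v ∈ W, Y.degree v + ∑ v ∈ Wᶜ, Y.degree v = ∑ v, Y.degree v :=
    Finset.sum_add_sum_compl W _
  have h1 : 2 * W.card ≤ ∑ v ∈ W, Y.degree v := by
    calc 2 * W.card = ∑ _v ∈ W, 2 := by rw [Finset.sum_const, smul_eq_mul, mul_comm]
    _ ≤ ∑ v ∈ W, Y.degree v := Finset.sum_le_sum hdegY
  have h2 : 1 ≤ ∑ v ∈ Wᶜ, Y.degree v := by
    refine le_trans hdegb (Finset.single_le_sum (f := fun v => Y.degree v)
      (fun i _ => Nat.zero_le _) ?_)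
    simpa using hbW
  have hmain : W.card + 1 ≤ Nat.card Y.edgeSet := by omega
  -- cardinality bookkeeping
  have hcardV : Fintype.card α = Nat.card U.verts + W.card := by
    rw [Nat.card_coe_set_eq]
    have := Set.ncard_add_ncard_compl U.verts
    rw [← Nat.card_eq_fintype_card, ← this]
    congr 1
    rw [hWdef, Set.ncard_eq_toFinset_card']
    congr 1
    ext x
    simp
  have hcardE : Nat.card X.edgeSet = Nat.card U.edgeSet + Nat.card Y.edgeSet := by
    rw [Nat.card_coe_set_eq, Nat.card_coe_set_eq, Nat.card_coe_set_eq]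
    have hXE : X.edgeSet = U.edgeSet ∪ Y.edgeSet := by
      rw [hE, Set.union_diff_cancel hsubE]
    rw [hXE, Set.ncard_union_eq (by rw [hE]; exact Set.disjoint_sdiff_right)
      (Set.toFinite _) (Set.toFinite _)]
  rw [hcardV, hcardE]
  push_cast
  omega
end
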